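/- There exists a finite rotation-puzzle instance 𝒜 over the two-color tile set T_2 (the two-color WIRE subpuzzle, simulating a vertical wire) with a designated input boundary edge at its bottom and a designated output boundary edge at its top lying directly above the input edge, such that for each color c ∈ {blue, red} the instance 𝒜 has exactly one solution whose color at the input edge is c, and this solution has color c at the output edge. -/

import Mathlib

/-- The two Tantrix colors used in the two-color tile set. -/
inductive Color where
  | red
  | blue
deriving DecidableEq

/-- A tile is its clockwise color sequence: a word of length 6 over the colors,
edges indexed `0, …, 5` clockwise. -/
abbrev Tile := Fin 6 → Color

/-- Cyclic rotation of a tile by `k` steps: edge `i` of the rotated tile carries the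
color of edge `i + k` of the original sequence.  Two solutions are compared as the
assigned rotated color sequences, so orientations of a tile with identical color
sequences are identified. -/
def rotTile (k : Fin 6) (t : Tile) : Tile := fun i => t (i + k)

open Color in
/-- The two-color tile set `T₂`, consisting of the 8 color sequences
bbrrrr, rrbbbb, brrbrr, rbbrbb, rbrrrb, brbbbr, bbbbbb, rrrrrr. -/
def T2 : Set Tile :=
  { ![blue,blue,red,red,red,red],
    ![red,red,blue,blue,blue,blue],
    ![blue,red,red,blue,red,red],
    ![red,blue,blue,red,blue,blue],
    ![red,blue,red,red,red,blue],
    ![blue,red,blue,blue,blue,red],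
    ![blue,blue,blue,blue,blue,blue],
    ![red,red,red,red,red,red] }

/-- The six neighbor offsets of the hexagonal layout of `ℤ²`, listed clockwise
starting from straight up; edge `i` of a tile at `x` is the edge shared with the
neighboring point `x + dirs i`, and opposite directions differ by `3` (mod 6).
Two points are neighbors exactly if their difference is one of these offsets. -/
def dirs : Fin 6 → ℤ × ℤ := ![(0,1), (1,1), (1,0), (0,-1), (-1,-1), (-1,0)]

/-- A finite rotation-puzzle instance over the tile set `T2`:
a function from a finite set of points of `ℤ²` to `T2`. -/
structure Puzzle where
  tiles : ℤ × ℤ → Option Tile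
  finite : {x | tiles x ≠ none}.Finite
  memT2 : ∀ x t, tiles x = some t → t ∈ T2

/-- `sol` is a solution of the instance `P`: it assigns to each occupied point a
cyclic rotation of the tile placed there, such that for every pair of neighboring
occupied points the two assigned sequences give the same color to their joint edge
(edge `d` of the tile at `x` is glued to edge `d + 3` of the tile at `x + dirs d`). -/
def IsSolution (P : Puzzle) (sol : ℤ × ℤ → Option Tile) : Prop :=
  (∀ x, (P.tiles x = none → sol x = none) ∧
    (∀ t, P.tiles x = some t → ∃ k : Fin 6, sol x = some (rotTile k t))) ∧
  (∀ (x : ℤ × ℤ) (d : Fin 6) (s s' : Tile),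
    sol x = some s → sol (x + dirs d) = some s' → s d = s' (d + 3))

/-- `(x, d)` is a boundary edge of `P`: the point `x` is occupied and its
neighbor in direction `d` is not. -/
def IsBoundary (P : Puzzle) (x : ℤ × ℤ) (d : Fin 6) : Prop :=
  P.tiles x ≠ none ∧ P.tiles (x + dirs d) = none

/-- The solution `sol` has color `c` at the edge in direction `d` of the tile at `x`. -/
def SolColor (sol : ℤ × ℤ → Option Tile) (x : ℤ × ℤ) (d : Fin 6) (c : Color) : Prop :=
  ∃ s, sol x = some s ∧ s d = c


namespace TwoColorWire
open Color

def wire : Tile := ![blue, red, red, blue, red, red]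
def allred : Tile := fun _ => red

def occ (x : ℤ × ℤ) : Option Tile :=
  if x = (5,5) ∨ x = (5,6) then some wire
  else if x = (6,6) ∨ x = (4,4) ∨ x = (4,6) then some allred
  else none

lemma wire_mem : wire ∈ T2 := Or.inr (Or.inr (Or.inl rfl))

lemma allred_mem : allred ∈ T2 := by
  have h : allred = ![red,red,red,red,red,red] := by funext i; fin_cases i <;> rfl
  rw [h]; exact Or.inr (Or.inr (Or.inr (Or.inr (Or.inr (Or.inr (Or.inr rfl))))))

def P : Puzzle where
  tiles := occ
  finite := by
    apply Set.Finite.subset (({(5,5), (5,6), (6,6), (4,4), (4,6)} : Finset (ℤ × ℤ)).finite_toSet)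
    intro x hx
    simp only [Set.mem_setOf_eq, occ] at hx
    by_cases h1 : x = (5,5) ∨ x = (5,6)
    · rcases h1 with h | h <;> subst h <;> simp
    · by_cases h2 : x = (6,6) ∨ x = (4,4) ∨ x = (4,6)
      · rcases h2 with h | h | h <;> subst h <;> simp
      · simp [h1, h2] at hx
  memT2 := by
    intro x t ht
    simp only [occ] at ht
    split at ht
    · injection ht with h; exact h ▸ wire_mem
    · split at ht
      · injection ht with h; exact h ▸ allred_mem
      · cases ht

def solOf (b t : Tile) : ℤ × ℤ → Option Tile := fun x =>
  if x = (5,5) then some b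
  else if x = (5,6) then some t
  else if x = (6,6) ∨ x = (4,4) ∨ x = (4,6) then some allred
  else none

lemma solOf_none (b t : Tile) (x : ℤ × ℤ) (h1 : x ≠ (5,5)) (h2 : x ≠ (5,6))
    (h3 : x ≠ (6,6)) (h4 : x ≠ (4,4)) (h5 : x ≠ (4,6)) : solOf b t x = none := by
  simp [solOf, h1, h2, h3, h4, h5]

lemma occ_none_of_ne (x : ℤ × ℤ) (h1 : x ≠ (5,5)) (h2 : x ≠ (5,6))
    (h3 : x ≠ (6,6)) (h4 : x ≠ (4,4)) (h5 : x ≠ (4,6)) : occ x = none := by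
  simp [occ, h1, h2, h3, h4, h5]

lemma isSolution_solOf (b t : Tile) (kb kt : Fin 6)
    (hb : b = rotTile kb wire) (ht : t = rotTile kt wire)
    (e1 : b 1 = red) (e4 : b 4 = red) (f2 : t 2 = red) (f5 : t 5 = red)
    (e03 : b 0 = t 3) : IsSolution P (solOf b t) := by
  constructor
  · intro x
    constructor
    · intro hx
      by_cases h1 : x = (5,5)
      · subst h1; exact nomatch (show some wire = none from hx)
      · by_cases h2 : x = (5,6)
        · subst h2; exact nomatch (show some wire = none from hx)
        · by_cases h3 : x = (6,6)
          · subst h3; exact nomatch (show some allred = none from hx)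
          · by_cases h4 : x = (4,4)
            · subst h4; exact nomatch (show some allred = none from hx)
            · by_cases h5 : x = (4,6)
              · subst h5; exact nomatch (show some allred = none from hx)
              · exact solOf_none b t x h1 h2 h3 h4 h5
    · intro t' ht'
      by_cases h1 : x = (5,5)
      · subst h1
        have h : some wire = some t' := ht'
        injection h with h
        refine ⟨kb, ?_⟩
        rw [← h, ← hb]; rfl
      · by_cases h2 : x = (5,6)
        · subst h2
          have h : some wire = some t' := ht'
          injection h with h
          refine ⟨kt, ?_⟩
          rw [← h, ← ht]; rfl
        · by_cases h3 : x = (6,6)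
          · subst h3
            have h : some allred = some t' := ht'
            injection h with h
            exact ⟨0, by rw [← h]; rfl⟩
          · by_cases h4 : x = (4,4)
            · subst h4
              have h : some allred = some t' := ht'
              injection h with h
              exact ⟨0, by rw [← h]; rfl⟩
            · by_cases h5 : x = (4,6)
              · subst h5
                have h : some allred = some t' := ht'
                injection h with h
                exact ⟨0, by rw [← h]; rfl⟩
              · have ht2 : occ x = some t' := ht'
                rw [occ_none_of_ne x h1 h2 h3 h4 h5] at ht2
                cases ht2
  · intro x d s s' hs hs'
    have hx : x = (5,5) ∨ x = (5,6) ∨ x = (6,6) ∨ x = (4,4) ∨ x = (4,6) := by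
      by_contra h
      push_neg at h
      rw [solOf_none b t x h.1 h.2.1 h.2.2.1 h.2.2.2.1 h.2.2.2.2] at hs
      cases hs
    rcases hx with rfl | rfl | rfl | rfl | rfl <;> fin_cases d
    · have h1 : some b = some s := hs
      have h2 : some t = some s' := hs'
      injection h1 with h1; injection h2 with h2
      rw [← h1, ← h2]
      exact e03
    · have h1 : some b = some s := hs
      have h2 : some allred = some s' := hs'
      injection h1 with h1; injection h2 with h2
      rw [← h1, ← h2]
      exact e1
    · exact nomatch (show (none : Option Tile) = some s' from hs')
    · exact nomatch (show (none : Option Tile) = some s' from hs')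
    · have h1 : some b = some s := hs
      have h2 : some allred = some s' := hs'
      injection h1 with h1; injection h2 with h2
      rw [← h1, ← h2]
      exact e4
    · exact nomatch (show (none : Option Tile) = some s' from hs')
    · exact nomatch (show (none : Option Tile) = some s' from hs')
    · exact nomatch (show (none : Option Tile) = some s' from hs')
    · have h1 : some t = some s := hs
      have h2 : some allred = some s' := hs'
      injection h1 with h1; injection h2 with h2
      rw [← h1, ← h2]
      exact f2
    · have h1 : some t = some s := hs
      have h2 : some b = some s' := hs'
      injection h1 with h1; injection h2 with h2
      rw [← h1, ← h2]
      exact e03.symm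
    · exact nomatch (show (none : Option Tile) = some s' from hs')
    · have h1 : some t = some s := hs
      have h2 : some allred = some s' := hs'
      injection h1 with h1; injection h2 with h2
      rw [← h1, ← h2]
      exact f5
    · exact nomatch (show (none : Option Tile) = some s' from hs')
    · exact nomatch (show (none : Option Tile) = some s' from hs')
    · exact nomatch (show (none : Option Tile) = some s' from hs')
    · exact nomatch (show (none : Option Tile) = some s' from hs')
    · have h1 : some allred = some s := hs
      have h2 : some b = some s' := hs'
      injection h1 with h1; injection h2 with h2
      rw [← h1, ← h2]
      exact e1.symm
    · have h1 : some allred = some s := hs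
      have h2 : some t = some s' := hs'
      injection h1 with h1; injection h2 with h2
      rw [← h1, ← h2]
      exact f2.symm
    · exact nomatch (show (none : Option Tile) = some s' from hs')
    · have h1 : some allred = some s := hs
      have h2 : some b = some s' := hs'
      injection h1 with h1; injection h2 with h2
      rw [← h1, ← h2]
      exact e4.symm
    · exact nomatch (show (none : Option Tile) = some s' from hs')
    · exact nomatch (show (none : Option Tile) = some s' from hs')
    · exact nomatch (show (none : Option Tile) = some s' from hs')
    · exact nomatch (show (none : Option Tile) = some s' from hs')
    · exact nomatch (show (none : Option Tile) = some s' from hs')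
    · exact nomatch (show (none : Option Tile) = some s' from hs')
    · have h1 : some allred = some s := hs
      have h2 : some t = some s' := hs'
      injection h1 with h1; injection h2 with h2
      rw [← h1, ← h2]
      exact f5.symm
    · exact nomatch (show (none : Option Tile) = some s' from hs')
    · exact nomatch (show (none : Option Tile) = some s' from hs')
    · exact nomatch (show (none : Option Tile) = some s' from hs')

lemma key (c : Color) (b t : Tile) (kb kt : Fin 6)
    (hb : b = rotTile kb wire) (ht : t = rotTile kt wire)
    (e1 : b 1 = red) (e4 : b 4 = red) (f2 : t 2 = red) (f5 : t 5 = red)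
    (e03 : b 0 = t 3) (hb0 : b 0 = c) (hin : b 3 = c) (hout : t 0 = c)
    (huniqb : ∀ k : Fin 6, wire (1+k) = red → wire (4+k) = red → wire (3+k) = c →
        rotTile k wire = b)
    (huniqt : ∀ k : Fin 6, wire (2+k) = red → wire (5+k) = red → wire (3+k) = c →
        rotTile k wire = t) :
    ∃ sol : ℤ × ℤ → Option Tile,
      (IsSolution P sol ∧ SolColor sol (5,5) 3 c ∧ SolColor sol (5,6) 0 c) ∧
      (∀ sol' : ℤ × ℤ → Option Tile,
        IsSolution P sol' → SolColor sol' (5,5) 3 c → sol' = sol) := by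
  refine ⟨solOf b t, ⟨isSolution_solOf b t kb kt hb ht e1 e4 f2 f5 e03,
      ⟨b, rfl, hin⟩, ⟨t, rfl, hout⟩⟩, ?_⟩
  intro sol' hS hC
  have hred : ∀ p : ℤ × ℤ, occ p = some allred → sol' p = some allred := by
    intro p hp
    obtain ⟨k, hk⟩ := (hS.1 p).2 allred hp
    rw [hk]; rfl
  have hr1 : sol' (6,6) = some allred := hred _ rfl
  have hr2 : sol' (4,4) = some allred := hred _ rfl
  have hr3 : sol' (4,6) = some allred := hred _ rfl
  obtain ⟨kb', hkb⟩ := (hS.1 (5,5)).2 wire rfl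
  have c1 : wire (1 + kb') = red := by
    have h := hS.2 (5,5) 1 (rotTile kb' wire) allred hkb
      (by rw [show ((5,5):ℤ×ℤ) + dirs 1 = (6,6) from by decide]; exact hr1)
    simpa [rotTile, allred] using h
  have c4 : wire (4 + kb') = red := by
    have h := hS.2 (5,5) 4 (rotTile kb' wire) allred hkb
      (by rw [show ((5,5):ℤ×ℤ) + dirs 4 = (4,4) from by decide]; exact hr2)
    simpa [rotTile, allred] using h
  have c3 : wire (3 + kb') = c := by
    obtain ⟨s, hs, hsc⟩ := hC
    rw [hkb] at hs
    injection hs with h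
    rw [← h] at hsc
    simpa [rotTile] using hsc
  have hbot : sol' (5,5) = some b := by rw [hkb, huniqb kb' c1 c4 c3]
  obtain ⟨kt', hkt⟩ := (hS.1 (5,6)).2 wire rfl
  have d2 : wire (2 + kt') = red := by
    have h := hS.2 (5,6) 2 (rotTile kt' wire) allred hkt
      (by rw [show ((5,6):ℤ×ℤ) + dirs 2 = (6,6) from by decide]; exact hr1)
    simpa [rotTile, allred] using h
  have d5 : wire (5 + kt') = red := by
    have h := hS.2 (5,6) 5 (rotTile kt' wire) allred hkt
      (by rw [show ((5,6):ℤ×ℤ) + dirs 5 = (4,6) from by decide]; exact hr3)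
    simpa [rotTile, allred] using h
  have d3 : wire (3 + kt') = c := by
    have h := hS.2 (5,5) 0 b (rotTile kt' wire) hbot
      (by rw [show ((5,5):ℤ×ℤ) + dirs 0 = (5,6) from by decide]; exact hkt)
    rw [hb0] at h
    simpa [rotTile] using h.symm
  have htop : sol' (5,6) = some t := by rw [hkt, huniqt kt' d2 d5 d3]
  funext x
  by_cases h1 : x = (5,5)
  · subst h1; rw [hbot]; rfl
  · by_cases h2 : x = (5,6)
    · subst h2; rw [htop]; rfl
    · by_cases h3 : x = (6,6)
      · subst h3; rw [hr1]; rfl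
      · by_cases h4 : x = (4,4)
        · subst h4; rw [hr2]; rfl
        · by_cases h5 : x = (4,6)
          · subst h5; rw [hr3]; rfl
          · rw [(hS.1 x).1 (occ_none_of_ne x h1 h2 h3 h4 h5),
              solOf_none b t x h1 h2 h3 h4 h5]

lemma final :
    ∃ (P : Puzzle) (xIn xOut : ℤ × ℤ),
      IsBoundary P xIn 3 ∧ IsBoundary P xOut 0 ∧
      xOut.1 = xIn.1 ∧ xIn.2 < xOut.2 ∧
      ∀ c ∈ ({Color.blue, Color.red} : Set Color),
        ∃ sol : ℤ × ℤ → Option Tile,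
          (IsSolution P sol ∧ SolColor sol xIn 3 c ∧ SolColor sol xOut 0 c) ∧
          (∀ sol' : ℤ × ℤ → Option Tile,
            IsSolution P sol' → SolColor sol' xIn 3 c → sol' = sol) := by
  refine ⟨P, (5,5), (5,6), ?_, ?_, rfl, by norm_num, ?_⟩
  · exact ⟨fun h => (nomatch (show some wire = none from h)),
      by rw [show ((5,5):ℤ×ℤ) + dirs 3 = (5,4) from by decide]; rfl⟩
  · exact ⟨fun h => (nomatch (show some wire = none from h)),
      by rw [show ((5,6):ℤ×ℤ) + dirs 0 = (5,7) from by decide]; rfl⟩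
  · intro c hc
    rcases hc with rfl | hc
    · exact key blue wire wire 0 0 (by decide) (by decide) rfl rfl rfl rfl rfl rfl rfl rfl
        (by decide) (by decide)
    · rw [Set.mem_singleton_iff] at hc
      subst hc
      exact key red (rotTile 1 wire) (rotTile 2 wire) 1 2 rfl rfl (by decide) (by decide)
        (by decide) (by decide) (by decide) (by decide) (by decide) (by decide)
        (by decide) (by decide)

end TwoColorWire

/-- the two-color WIRE subpuzzle: input boundary edge at the bottom, output boundary edge at the top directly above it; for each color `c ∈ {blue, red}` there is exactly one solution with color `c` at the input edge, and it has color `c` at the output edge. -/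
theorem two_color_WIRE_subpuzzle :
    ∃ (P : Puzzle) (xIn xOut : ℤ × ℤ),
      IsBoundary P xIn 3 ∧ IsBoundary P xOut 0 ∧
      xOut.1 = xIn.1 ∧ xIn.2 < xOut.2 ∧
      ∀ c ∈ ({Color.blue, Color.red} : Set Color),
        ∃ sol : ℤ × ℤ → Option Tile,
          (IsSolution P sol ∧ SolColor sol xIn 3 c ∧ SolColor sol xOut 0 c) ∧
          (∀ sol' : ℤ × ℤ → Option Tile,
            IsSolution P sol' → SolColor sol' xIn 3 c → sol' = sol) := by
  exact TwoColorWire.final
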